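/- For every integer n ≥ 2, the scaled stability region S_n is contained in the closed disk D_{1.6}, i.e., every z ∈ ℂ with |P_n(z)| ≤ 1 satisfies |z| ≤ 1.6. -/

import Mathlib

open Finset

noncomputable def P (n : ℕ) (z : ℂ) : ℂ :=
  ∑ k ∈ Finset.range (n + 1), ((n : ℂ) * z) ^ k / (Nat.factorial k)

lemma two_mul_pow_le (n : ℕ) (hn : 1 ≤ n) :
    2 * (n:ℝ)^n ≤ ((n:ℝ)+1)^n := by
  have hn0 : (0:ℝ) < n := by exact_mod_cast hn
  have hpos : (0:ℝ) ≤ 1/(n:ℝ) := by positivity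
  have h := one_add_mul_le_pow (a := (1:ℝ)/n) (by linarith) n
  have h2 : (1:ℝ) + (n:ℝ) * (1/(n:ℝ)) = 2 := by field_simp; norm_num
  rw [h2] at h
  have h3 : ((n:ℝ)+1)^n = (n:ℝ)^n * (1 + 1/(n:ℝ))^n := by
    rw [← mul_pow]
    congr 1
    field_simp
  rw [h3]
  nlinarith [pow_pos hn0 n]

lemma fact_bound (n : ℕ) (hn : 2 ≤ n) :
    5 * (Nat.factorial n : ℝ) ≤ ((8/5:ℝ) * n)^n := by
  induction n, hn using Nat.le_induction with
  | base => norm_num [Nat.factorial]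
  | succ n hn ih =>
    have h1 : 2 * (n:ℝ)^n ≤ ((n:ℝ)+1)^n := two_mul_pow_le n (by omega)
    have hfac : (Nat.factorial (n+1) : ℝ) = ((n:ℝ)+1) * Nat.factorial n := by
      push_cast [Nat.factorial_succ]; ring
    have hn0 : (0:ℝ) < (n:ℝ) := by exact_mod_cast (by omega : 0 < n)
    have hpow : ((8/5:ℝ) * (n+1:ℕ))^(n+1) = (8/5) * ((n:ℝ)+1) * ((8/5:ℝ))^n * ((n:ℝ)+1)^n := by
      push_cast
      rw [mul_pow, pow_succ, pow_succ]
      ring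
    rw [hpow, hfac]
    have h85 : ((8/5:ℝ)*n)^n = (8/5:ℝ)^n * (n:ℝ)^n := by rw [mul_pow]
    rw [h85] at ih
    have hp : (0:ℝ) < (8/5:ℝ)^n := by positivity
    nlinarith [mul_le_mul_of_nonneg_left h1 hp.le, mul_pos hp (pow_pos hn0 n)]

lemma key_id (n : ℕ) (z : ℂ) :
    (n:ℂ) * (z - 1) * P n z
      = (n:ℂ) * z * (((n:ℂ) * z)^n / (Nat.factorial n))
        - ∑ k ∈ Finset.range (n+1), ((n - k : ℕ) : ℂ) * (((n:ℂ)*z)^k / (Nat.factorial k)) := by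
  classical
  have h1 : (n:ℂ) * (z-1) * P n z
      = ∑ k ∈ range (n+1),
          ((n:ℂ)*(z-1)) * (((n:ℂ)*z)^k / (Nat.factorial k)) := by
    rw [P, Finset.mul_sum]
  rw [h1]
  have h2 : ∀ k ∈ range (n+1),
      ((n:ℂ)*(z-1)) * (((n:ℂ)*z)^k / (Nat.factorial k))
        = (((k+1:ℕ):ℂ) * (((n:ℂ)*z)^(k+1) / (Nat.factorial (k+1)))
            - ((k:ℕ):ℂ) * (((n:ℂ)*z)^k / (Nat.factorial k)))
          - ((n - k : ℕ) : ℂ) * (((n:ℂ)*z)^k / (Nat.factorial k)) := by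
    intro k hk
    have hkn : k ≤ n := Nat.lt_succ_iff.mp (Finset.mem_range.mp hk)
    have hcast : ((n - k : ℕ) : ℂ) = (n:ℂ) - k := Nat.cast_sub hkn
    have hfac : (Nat.factorial (k+1) : ℂ) = ((k:ℂ)+1) * (Nat.factorial k) := by
      push_cast [Nat.factorial_succ]; ring
    have hfk : (Nat.factorial k : ℂ) ≠ 0 := Nat.cast_ne_zero.mpr (Nat.factorial_ne_zero k)
    have hfk1 : ((k:ℂ)+1) ≠ 0 := Nat.cast_add_one_ne_zero k
    rw [hcast]
    push_cast
    rw [hfac]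
    field_simp
    ring
  rw [Finset.sum_congr rfl h2, Finset.sum_sub_distrib]
  have h3 : ∑ k ∈ range (n+1),
      (((k+1:ℕ):ℂ) * (((n:ℂ)*z)^(k+1) / (Nat.factorial (k+1)))
        - ((k:ℕ):ℂ) * (((n:ℂ)*z)^k / (Nat.factorial k)))
      = ((n+1:ℕ):ℂ) * (((n:ℂ)*z)^(n+1) / (Nat.factorial (n+1))) := by
    have := Finset.sum_range_sub (fun k => ((k:ℕ):ℂ) * (((n:ℂ)*z)^k / (Nat.factorial k))) (n+1)
    simpa using this
  rw [h3]
  congr 1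
  have hfac : (Nat.factorial (n+1) : ℂ) = ((n:ℂ)+1) * (Nat.factorial n) := by
    push_cast [Nat.factorial_succ]; ring
  have hfn : (Nat.factorial n : ℂ) ≠ 0 := Nat.cast_ne_zero.mpr (Nat.factorial_ne_zero n)
  have hn1 : ((n:ℂ)+1) ≠ 0 := Nat.cast_add_one_ne_zero n
  push_cast
  rw [hfac]
  field_simp [pow_succ]
  ring

lemma real_telescope (n : ℕ) :
    ∑ k ∈ Finset.range (n+1), ((n - k : ℕ) : ℝ) * ((n:ℝ)^k / (Nat.factorial k))
      = (n:ℝ)^(n+1) / (Nat.factorial n) := by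
  have h2 : ∀ k ∈ range (n+1),
      ((n - k : ℕ) : ℝ) * ((n:ℝ)^k / (Nat.factorial k))
        = ((k+1:ℕ):ℝ) * ((n:ℝ)^(k+1) / (Nat.factorial (k+1)))
            - ((k:ℕ):ℝ) * ((n:ℝ)^k / (Nat.factorial k)) := by
    intro k hk
    have hkn : k ≤ n := Nat.lt_succ_iff.mp (Finset.mem_range.mp hk)
    have hcast : ((n - k : ℕ) : ℝ) = (n:ℝ) - k := Nat.cast_sub hkn
    have hfac : (Nat.factorial (k+1) : ℝ) = ((k:ℝ)+1) * (Nat.factorial k) := by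
      push_cast [Nat.factorial_succ]; ring
    have hfk : (Nat.factorial k : ℝ) ≠ 0 := Nat.cast_ne_zero.mpr (Nat.factorial_ne_zero k)
    have hfk1 : ((k:ℝ)+1) ≠ 0 := by positivity
    rw [hcast]
    push_cast
    rw [hfac]
    field_simp
    ring
  rw [Finset.sum_congr rfl h2]
  have h3 := Finset.sum_range_sub (fun k => ((k:ℕ):ℝ) * ((n:ℝ)^k / (Nat.factorial k))) (n+1)
  rw [h3]
  have hfac : (Nat.factorial (n+1) : ℝ) = ((n:ℝ)+1) * (Nat.factorial n) := by
    push_cast [Nat.factorial_succ]; ring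
  have hfn : (Nat.factorial n : ℝ) ≠ 0 := Nat.cast_ne_zero.mpr (Nat.factorial_ne_zero n)
  have hn1 : ((n:ℝ)+1) ≠ 0 := by positivity
  push_cast
  rw [hfac]
  field_simp [pow_succ]
  ring

/-- For every integer `n ≥ 2`, the scaled stability region `S_n` is contained in
the closed disk of radius `1.6`. -/
theorem Sn_subset_D_1_6 (n : ℕ) (hn : 2 ≤ n) (z : ℂ) (hz : ‖P n z‖ ≤ 1) :
    ‖z‖ ≤ 1.6 := by
  by_contra hcon
  push_neg at hcon
  have hr : (8/5:ℝ) < ‖z‖ := by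
    have : (1.6:ℝ) = 8/5 := by norm_num
    linarith [hcon]
  set r := ‖z‖ with hrdef
  have hr1 : (1:ℝ) ≤ r := by linarith
  have hr0 : (0:ℝ) < r := by linarith
  have hn0 : 0 < n := by omega
  have hnR : (0:ℝ) < (n:ℝ) := by exact_mod_cast hn0
  have habs_t : ∀ k : ℕ, ‖((n:ℂ)*z)^k / (Nat.factorial k)‖
      = ((n:ℝ)*r)^k / (Nat.factorial k) := by
    intro k
    rw [norm_div, norm_pow, norm_mul, Complex.norm_natCast, Complex.norm_natCast]
  set T : ℝ := ((n:ℝ)*r)^n / (Nat.factorial n) with hT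
  set S : ℝ := r^(n-1) * ((n:ℝ)^(n+1) / (Nat.factorial n)) with hS
  -- bound on the sum
  have hsum_bound : ‖∑ k ∈ Finset.range (n+1),
      ((n - k : ℕ) : ℂ) * (((n:ℂ)*z)^k / (Nat.factorial k))‖ ≤ S := by
    calc ‖∑ k ∈ Finset.range (n+1),
        ((n - k : ℕ) : ℂ) * (((n:ℂ)*z)^k / (Nat.factorial k))‖
        ≤ ∑ k ∈ Finset.range (n+1),
            ‖((n - k : ℕ) : ℂ) * (((n:ℂ)*z)^k / (Nat.factorial k))‖ := by
          exact norm_sum_le _ _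
      _ ≤ ∑ k ∈ Finset.range (n+1),
            ((n - k : ℕ) : ℝ) * (r^(n-1) * ((n:ℝ)^k / (Nat.factorial k))) := by
          apply Finset.sum_le_sum
          intro k hk
          rw [norm_mul, Complex.norm_natCast, habs_t]
          have hkn : k ≤ n := Nat.lt_succ_iff.mp (Finset.mem_range.mp hk)
          rcases eq_or_lt_of_le hkn with h | h
          · subst h; simp
          · have hkn1 : k ≤ n - 1 := by omega
            have hrk : r^k ≤ r^(n-1) := pow_le_pow_right₀ hr1 hkn1
            have : ((n:ℝ)*r)^k / (Nat.factorial k)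
                ≤ r^(n-1) * ((n:ℝ)^k / (Nat.factorial k)) := by
              rw [mul_pow]
              rw [div_le_iff₀ (by positivity : (0:ℝ) < (Nat.factorial k : ℝ))]
              have hnk : (0:ℝ) ≤ (n:ℝ)^k := by positivity
              calc (n:ℝ)^k * r^k ≤ (n:ℝ)^k * r^(n-1) := by
                    exact mul_le_mul_of_nonneg_left hrk hnk
                _ = r^(n-1) * ((n:ℝ)^k / (Nat.factorial k)) * (Nat.factorial k) := by
                    field_simp
            exact mul_le_mul_of_nonneg_left this (by positivity)
      _ = r^(n-1) * ∑ k ∈ Finset.range (n+1),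
            ((n - k : ℕ) : ℝ) * ((n:ℝ)^k / (Nat.factorial k)) := by
          rw [Finset.mul_sum]
          apply Finset.sum_congr rfl
          intro k _
          ring
      _ = S := by rw [real_telescope]
  -- abs of leading term
  have hlead : ‖(n:ℂ) * z * (((n:ℂ) * z)^n / (Nat.factorial n))‖
      = (n:ℝ) * r * T := by
    rw [norm_mul, norm_mul, Complex.norm_natCast, habs_t, hT]
  -- lower bound
  have hlow : (n:ℝ) * r * T - S ≤ ‖(n:ℂ) * (z - 1) * P n z‖ := by
    rw [key_id]
    calc (n:ℝ) * r * T - S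
        ≤ ‖(n:ℂ) * z * (((n:ℂ) * z)^n / (Nat.factorial n))‖
          - ‖∑ k ∈ Finset.range (n+1),
              ((n - k : ℕ) : ℂ) * (((n:ℂ)*z)^k / (Nat.factorial k))‖ := by
          rw [hlead]; linarith
      _ ≤ _ := by
          have := norm_sub_norm_le ((n:ℂ) * z * (((n:ℂ) * z)^n / (Nat.factorial n)))
            (∑ k ∈ Finset.range (n+1), ((n - k : ℕ) : ℂ) * (((n:ℂ)*z)^k / (Nat.factorial k)))
          simpa using this
  -- upper bound
  have hup : ‖(n:ℂ) * (z - 1) * P n z‖ ≤ (n:ℝ) * (r + 1) := by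
    rw [norm_mul, norm_mul, Complex.norm_natCast]
    have h1 : ‖z - 1‖ ≤ r + 1 := by
      have := norm_sub_le z 1
      simpa using this
    calc (n:ℝ) * ‖z-1‖ * ‖P n z‖
        ≤ (n:ℝ) * (r+1) * 1 := by
          apply mul_le_mul
          · exact mul_le_mul_of_nonneg_left h1 hnR.le
          · exact hz
          · exact norm_nonneg _
          · positivity
      _ = (n:ℝ) * (r+1) := by ring
  -- T ≥ 5
  have hT5 : (5:ℝ) ≤ T := by
    have h1 : ((8/5:ℝ) * n)^n ≤ ((n:ℝ)*r)^n := by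
      apply pow_le_pow_left₀ (by positivity)
      nlinarith
    have h2 := fact_bound n hn
    rw [hT]
    rw [le_div_iff₀ (by positivity : (0:ℝ) < (Nat.factorial n : ℝ))]
    linarith
  -- r * S = n * T
  have hE : r * S = (n:ℝ) * T := by
    have hrn : r^n = r^(n-1) * r := by
      rw [← pow_succ]
      congr 1
      omega
    rw [hS, hT, mul_pow, hrn, pow_succ]
    ring
  -- final contradiction
  have hmain : (n:ℝ) * r * T - S ≤ (n:ℝ) * (r + 1) := le_trans hlow hup
  have h1 := mul_le_mul_of_nonneg_right hmain hr0.le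
  have h2 : (n:ℝ)*r*T*r - (n:ℝ)*T ≤ (n:ℝ)*(r+1)*r := by nlinarith [hE]
  have h3 : (0:ℝ) ≤ (n:ℝ) * ((r^2 - 1) * (T - 5)) := by
    apply mul_nonneg hnR.le
    apply mul_nonneg
    · nlinarith
    · linarith
  have h4 : (0:ℝ) < (n:ℝ) * (4*r^2 - r - 5) := by
    apply mul_pos hnR
    nlinarith
  nlinarith [h2, h3, h4]
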